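/- Let d ≥ 4 and let G be a d-regular graph with no 4-cycle, T a nontrivial minimum edge-cut of G, and G₁ a connected component of G \ T. Let A₁ be the set of vertices of G₁ incident to an edge of T. Then there exists a vertex a ∈ V(G₁) \ A₁ such that a has at most 2 neighbors (in G) inside A₁. -/

import Mathlib

def HasC4 {V : Type*} (G : SimpleGraph V) : Prop :=
  ∃ a b c d : V, a ≠ b ∧ a ≠ c ∧ a ≠ d ∧ b ≠ c ∧ b ≠ d ∧ c ≠ d ∧
    G.Adj a b ∧ G.Adj b c ∧ G.Adj c d ∧ G.Adj d a

def IsEdgeCut {V : Type*} (G : SimpleGraph V) (T : Finset (Sym2 V)) : Prop :=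
  ↑T ⊆ G.edgeSet ∧ ¬ (G.deleteEdges ↑T).Connected

def IsMinEdgeCut {V : Type*} (G : SimpleGraph V) (T : Finset (Sym2 V)) : Prop :=
  IsEdgeCut G T ∧ ∀ T' : Finset (Sym2 V), IsEdgeCut G T' → T.card ≤ T'.card

def IsTrivialEdgeCut {V : Type*} (G : SimpleGraph V) (T : Finset (Sym2 V)) : Prop :=
  ∃ v : V, (↑T : Set (Sym2 V)) = {e ∈ G.edgeSet | v ∈ e}

lemma stmt6_arith1 (s dd lam : ℕ) (hlam : lam ≤ dd) (h2 : 2 ≤ s) (hsd : s ≤ dd)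
    (hmain : dd * s ≤ lam + s * (s - 1)) : s = dd ∧ lam = dd := by
  obtain ⟨k, rfl⟩ : ∃ k, s = k + 2 := ⟨s - 2, by omega⟩
  have h1 : k + 2 - 1 = k + 1 := by omega
  rw [h1] at hmain
  constructor <;> nlinarith

lemma stmt6_arith2 (dd x rest lam : ℕ) (h4 : 4 ≤ dd) (hlam : lam ≤ dd)
    (hsum : dd * dd ≤ x + rest + lam) (hrest : rest ≤ (dd - 1) * (dd - 1)) :
    dd - 1 ≤ x := by
  obtain ⟨k, rfl⟩ : ∃ k, dd = k + 4 := ⟨dd - 4, by omega⟩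
  have h1 : k + 4 - 1 = k + 3 := by omega
  rw [h1] at hrest ⊢
  nlinarith

lemma stmt6_arith3 (dd lam a bb SS s : ℕ) (h4 : 4 ≤ dd) (hlam : lam ≤ dd) (ha : a ≤ lam)
    (hsplit : s = a + bb) (hunion : 1 + dd + SS ≤ s) (hsumS : dd * dd ≤ SS + lam + 2 * dd)
    (hBA : 3 * bb ≤ (dd - 1) * a) : False := by
  obtain ⟨k, rfl⟩ : ∃ k, dd = k + 4 := ⟨dd - 4, by omega⟩
  have h1 : k + 4 - 1 = k + 3 := by omega
  rw [h1] at hBA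
  nlinarith [Nat.mul_le_mul_left (k + 3) (show a ≤ k + 4 by omega)]

/-- Lemma 1: in a `d`-regular C₄-free graph (`d ≥ 4`) with a nontrivial minimum
edge-cut `T`, every component `G₁` of `G \ T` contains a vertex `a` outside
`A₁ = V(G₁) ∩ sat(T)` having at most two neighbors in `A₁`. -/
theorem stmt6 {V : Type*} [Fintype V] (G : SimpleGraph V) [DecidableRel G.Adj]
    (d : ℕ) (hd : 4 ≤ d) (hreg : G.IsRegularOfDegree d) (hC4 : ¬ HasC4 G)
    (hconn : G.Connected)
    (T : Finset (Sym2 V)) (hmin : IsMinEdgeCut G T) (hnt : ¬ IsTrivialEdgeCut G T)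
    (c : (G.deleteEdges ↑T).ConnectedComponent) :
    ∃ a ∈ c.supp, ¬ (∃ e ∈ T, a ∈ e) ∧
      (G.neighborSet a ∩ (c.supp ∩ {x | ∃ e ∈ T, x ∈ e})).ncard ≤ 2 := by
  classical
  obtain ⟨⟨hTsub, hHnc⟩, hmin2⟩ := hmin
  have hne : Nonempty V := hconn.nonempty
  -- no-C4 in convenient form
  have hnoc4 : ∀ x u y w : V, x ≠ y → u ≠ w → G.Adj x u → G.Adj u y → G.Adj y w →
      G.Adj w x → False := by
    intro x u y w hxy huw h1 h2 h3 h4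
    exact hC4 ⟨x, u, y, w, h1.ne, hxy, (h4.symm).ne, h2.ne, huw, h3.ne, h1, h2, h3, h4⟩
  -- λ ≤ d
  have hlam : T.card ≤ d := by
    have hnp : ¬ (G.deleteEdges ↑T).Preconnected := by
      intro hp; exact hHnc ((SimpleGraph.connected_iff _).2 ⟨hp, hne⟩)
    rw [SimpleGraph.Preconnected] at hnp
    push_neg at hnp
    obtain ⟨v, u, hvu⟩ := hnp
    have hvne : v ≠ u := fun h => hvu (h ▸ SimpleGraph.Reachable.refl v)
    have hcut : IsEdgeCut G (G.incidenceFinset v) := by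
      constructor
      · intro e he
        rw [Finset.mem_coe, SimpleGraph.mem_incidenceFinset] at he
        exact G.incidenceSet_subset v he
      · intro hcon
        obtain ⟨p⟩ := hcon.preconnected v u
        cases p with
        | nil => exact hvne rfl
        | cons h q =>
          rw [SimpleGraph.deleteEdges_adj] at h
          refine h.2 ?_
          rw [Finset.mem_coe, SimpleGraph.mem_incidenceFinset]
          exact (G.mem_incidenceSet v _).2 h.1
    calc T.card ≤ (G.incidenceFinset v).card := hmin2 _ hcut
      _ = d := by rw [SimpleGraph.card_incidenceFinset_eq_degree]; exact hreg v
  -- endpoints of a cut edge are not reachable in G - T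
  have hcross : ∀ x y : V, s(x,y) ∈ T → ¬ (G.deleteEdges (↑T : Set (Sym2 V))).Reachable x y := by
    intro x y hxyT hreach
    set T' : Finset (Sym2 V) := T.erase s(x,y) with hT'
    have htrans : ∀ u w : V, (G.deleteEdges (↑T' : Set (Sym2 V))).Reachable u w →
        (G.deleteEdges (↑T : Set (Sym2 V))).Reachable u w := by
      intro u w hr
      obtain ⟨p⟩ := hr
      induction p with
      | nil => exact SimpleGraph.Reachable.refl _
      | @cons a b w' h q ih =>
        rw [SimpleGraph.deleteEdges_adj] at h
        have hab : (G.deleteEdges (↑T : Set (Sym2 V))).Reachable a b := by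
          by_cases hmem : s(a, b) ∈ T
          · have : s(a, b) = s(x, y) := by
              by_contra hne'
              exact h.2 (Finset.mem_coe.2 (Finset.mem_erase.2 ⟨hne', hmem⟩))
            rcases Sym2.eq_iff.1 this with ⟨ha, hb⟩ | ⟨ha, hb⟩
            · subst ha; subst hb; exact hreach
            · subst ha; subst hb; exact hreach.symm
          · exact SimpleGraph.Adj.reachable
              ((SimpleGraph.deleteEdges_adj).2 ⟨h.1, fun hc => hmem (Finset.mem_coe.1 hc)⟩)
        exact hab.trans ih
    have hcut : IsEdgeCut G T' := by
      constructor
      · exact fun e he => hTsub (Finset.mem_coe.2 (Finset.mem_of_mem_erase (Finset.mem_coe.1 he)))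
      · intro hcon
        refine hHnc ((SimpleGraph.connected_iff _).2 ⟨fun a b => htrans a b (hcon.preconnected a b), hne⟩)
    have h1 := hmin2 _ hcut
    have h2 : T'.card = T.card - 1 := Finset.card_erase_of_mem hxyT
    have h3 : 0 < T.card := Finset.card_pos.2 ⟨_, hxyT⟩
    omega
  -- staying in the component
  have hstay : ∀ x, x ∈ c.supp → ∀ y, G.Adj x y → s(x,y) ∉ T → y ∈ c.supp := by
    intro x hx y hxy hnot
    rw [SimpleGraph.ConnectedComponent.mem_supp_iff] at hx ⊢
    have : (G.deleteEdges (↑T : Set (Sym2 V))).Reachable y x :=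
      SimpleGraph.Adj.reachable ((SimpleGraph.deleteEdges_adj).2
        ⟨hxy.symm, by rw [Sym2.eq_swap]; exact fun hc => hnot (Finset.mem_coe.1 hc)⟩)
    rw [← hx]
    exact SimpleGraph.ConnectedComponent.eq.2 this
  -- two component vertices on the same cut edge coincide
  have hone : ∀ e ∈ T, ∀ x, x ∈ c.supp → ∀ y, y ∈ c.supp → x ∈ e → y ∈ e → x = y := by
    intro e he x hx y hy hxe hye
    by_contra hxy
    induction e with
    | h u w =>
      have hreach : (G.deleteEdges (↑T : Set (Sym2 V))).Reachable x y := by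
        rw [SimpleGraph.ConnectedComponent.mem_supp_iff] at hx hy
        exact SimpleGraph.ConnectedComponent.eq.1 (hx.trans hy.symm)
      rw [Sym2.mem_iff] at hxe hye
      have : s(x, y) = s(u, w) := by
        rcases hxe with rfl | rfl <;> rcases hye with rfl | rfl
        · exact absurd rfl hxy
        · rfl
        · exact Sym2.eq_swap
        · exact absurd rfl hxy
      exact hcross x y (this ▸ he) hreach
  -- Finset versions
  set C : Finset V := c.supp.toFinset with hC
  have hmemC : ∀ x, x ∈ C ↔ x ∈ c.supp := fun x => Set.mem_toFinset
  set A : Finset V := C.filter (fun x => ∃ e ∈ T, x ∈ e) with hA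
  set B : Finset V := C.filter (fun x => ¬ ∃ e ∈ T, x ∈ e) with hB
  have hmemA : ∀ x, x ∈ A ↔ x ∈ C ∧ ∃ e ∈ T, x ∈ e := fun x => Finset.mem_filter
  have hmemB : ∀ x, x ∈ B ↔ x ∈ C ∧ ¬ ∃ e ∈ T, x ∈ e := fun x => Finset.mem_filter
  have hCne : C.Nonempty := by
    obtain ⟨a, ha⟩ := Quot.exists_rep c
    exact ⟨a, (hmemC a).2 (by rw [SimpleGraph.ConnectedComponent.mem_supp_iff]; exact ha)⟩
  -- t v = number of cut edges at v
  set t : V → ℕ := fun v => (T.filter (fun e => v ∈ e)).card with ht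
  -- each vertex of C has at least d - t v neighbors inside C
  have hdegC : ∀ v ∈ C, d ≤ (G.neighborFinset v ∩ C).card + t v := by
    intro v hv
    have hcard : (G.neighborFinset v ∩ C).card + (G.neighborFinset v \ C).card
        = (G.neighborFinset v).card := Finset.card_inter_add_card_sdiff _ _
    have hout : (G.neighborFinset v \ C).card ≤ t v := by
      show (G.neighborFinset v \ C).card ≤ (T.filter (fun e => v ∈ e)).card
      refine Finset.card_le_card_of_injOn (fun w => s(v, w)) ?_ ?_
      · intro w hw
        rw [Finset.mem_coe, Finset.mem_sdiff, SimpleGraph.mem_neighborFinset] at hw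
        rw [Finset.mem_coe, Finset.mem_filter]
        refine ⟨?_, Sym2.mem_mk_left v w⟩
        by_contra hnot
        exact hw.2 ((hmemC w).2 (hstay v ((hmemC v).1 hv) w hw.1 hnot))
      · intro w1 h1 w2 h2 heq
        rcases Sym2.eq_iff.1 heq with ⟨-, h⟩ | ⟨h1', h2'⟩
        · exact h
        · simp only [Finset.coe_sdiff, Set.mem_diff, Finset.mem_coe,
            SimpleGraph.mem_neighborFinset] at h2
          exact absurd h1'.symm h2.1.ne'
    have : (G.neighborFinset v).card = d := hreg v
    omega
  -- counting incidences
  have hsum_t : ∀ D : Finset V, D ⊆ C → (∑ v ∈ D, t v) ≤ T.card := by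
    intro D hD
    have hswap : (∑ v ∈ D, t v) = ∑ e ∈ T, (D.filter (fun v => v ∈ e)).card := by
      simp only [ht, Finset.card_filter]
      rw [Finset.sum_comm]
    rw [hswap]
    have hle : ∀ e ∈ T, (D.filter (fun v => v ∈ e)).card ≤ 1 := by
      intro e he
      rw [Finset.card_le_one]
      intro a ha b hb
      rw [Finset.mem_filter] at ha hb
      exact hone e he a ((hmemC a).1 (hD ha.1)) b ((hmemC b).1 (hD hb.1)) ha.2 hb.2
    calc (∑ e ∈ T, (D.filter (fun v => v ∈ e)).card) ≤ ∑ e ∈ T, 1 := Finset.sum_le_sum hle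
      _ = T.card := by simp
  have hAcard : A.card ≤ T.card := by
    have h1 : ∀ a ∈ A, 1 ≤ t a := by
      intro a ha
      obtain ⟨e, he, hae⟩ := ((hmemA a).1 ha).2
      show 1 ≤ (T.filter (fun e => a ∈ e)).card
      exact Finset.card_pos.2 ⟨e, Finset.mem_filter.2 ⟨he, hae⟩⟩
    calc A.card = ∑ a ∈ A, 1 := by simp
      _ ≤ ∑ a ∈ A, t a := Finset.sum_le_sum h1
      _ ≤ T.card := hsum_t A (Finset.filter_subset _ _)
  -- bound on within-component degree
  have hupp : ∀ v ∈ C, (G.neighborFinset v ∩ C).card ≤ C.card - 1 := by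
    intro v hv
    have hsub : G.neighborFinset v ∩ C ⊆ C.erase v := by
      intro w hw
      rw [Finset.mem_inter, SimpleGraph.mem_neighborFinset] at hw
      exact Finset.mem_erase.2 ⟨hw.1.ne', hw.2⟩
    calc (G.neighborFinset v ∩ C).card ≤ (C.erase v).card := Finset.card_le_card hsub
      _ = C.card - 1 := Finset.card_erase_of_mem hv
  -- B is nonempty
  have hBne : B.Nonempty := by
    rw [Finset.nonempty_iff_ne_empty]
    intro hBempty
    have hCA : C = A := by
      apply Finset.Subset.antisymm _ (Finset.filter_subset _ _)
      intro x hx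
      refine (hmemA x).2 ⟨hx, ?_⟩
      by_contra hnot
      have : x ∈ B := (hmemB x).2 ⟨hx, hnot⟩
      rw [hBempty] at this
      exact absurd this (Finset.notMem_empty x)
    have hsd : C.card ≤ d := by
      have : C.card = A.card := by rw [hCA]
      omega
    by_cases hs1 : C.card = 1
    · -- trivial cut
      obtain ⟨v, hv⟩ := Finset.card_eq_one.1 hs1
      have hvC : v ∈ C := hv ▸ Finset.mem_singleton_self v
      have hdt : d ≤ t v := by
        have h1 := hdegC v hvC
        have h2 := hupp v hvC
        omega
      have htT : t v ≤ T.card := by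
        show (T.filter (fun e => v ∈ e)).card ≤ T.card
        exact Finset.card_le_card (Finset.filter_subset _ _)
      have hfil : T.filter (fun e => v ∈ e) = T := by
        apply Finset.eq_of_subset_of_card_le (Finset.filter_subset _ _)
        show T.card ≤ t v
        omega
      have hallv : ∀ e ∈ T, v ∈ e := by
        intro e he
        have : e ∈ T.filter (fun e => v ∈ e) := by rw [hfil]; exact he
        exact (Finset.mem_filter.1 this).2
      refine hnt ⟨v, ?_⟩
      ext e
      simp only [Set.mem_setOf_eq, Finset.mem_coe]
      constructor
      · intro he; exact ⟨hTsub he, hallv e he⟩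
      · rintro ⟨hee, hve⟩
        obtain ⟨w, rfl⟩ := Sym2.mem_iff_exists.1 hve
        by_contra hnot
        have hadj : G.Adj v w := (SimpleGraph.mem_edgeSet G).1 hee
        have hw : w ∈ c.supp := hstay v ((hmemC v).1 hvC) w hadj hnot
        have : w ∈ C := (hmemC w).2 hw
        rw [hv, Finset.mem_singleton] at this
        exact hadj.ne this.symm
    · -- C.card ≥ 2 : complete component, find a C4
      have hs2 : 2 ≤ C.card := by
        have := hCne.card_pos; omega
      -- d * s ≤ T.card + s * (s - 1)
      have hmain : d * C.card ≤ T.card + C.card * (C.card - 1) := by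
        have h1 : ∀ v ∈ C, d ≤ (C.card - 1) + t v := by
          intro v hv
          have h2 := hdegC v hv
          have h3 := hupp v hv
          omega
        have h2 : d * C.card ≤ ∑ v ∈ C, ((C.card - 1) + t v) := by
          calc d * C.card = ∑ _v ∈ C, d := by rw [Finset.sum_const, smul_eq_mul, mul_comm]
            _ ≤ _ := Finset.sum_le_sum h1
        rw [Finset.sum_add_distrib, Finset.sum_const, smul_eq_mul] at h2
        have h3 := hsum_t C (le_refl _)
        omega
      obtain ⟨hsd', hTd⟩ := stmt6_arith1 C.card d T.card hlam hs2 hsd hmain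
      -- every vertex adjacent to all others in C
      have hcomplete : ∀ v ∈ C, ∀ w ∈ C, v ≠ w → G.Adj v w := by
        intro v hv w hw hvw
        have hsumdeg : d * d ≤ (∑ u ∈ C, (G.neighborFinset u ∩ C).card) + T.card := by
          have h2 : d * d ≤ ∑ u ∈ C, ((G.neighborFinset u ∩ C).card + t u) := by
            calc d * d = ∑ _u ∈ C, d := by
                  rw [Finset.sum_const, smul_eq_mul, mul_comm, hsd']
              _ ≤ _ := Finset.sum_le_sum (fun u hu => hdegC u hu)
          rw [Finset.sum_add_distrib] at h2
          have h3 := hsum_t C (le_refl _)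
          omega
        have hrest : ∑ u ∈ C.erase v, (G.neighborFinset u ∩ C).card ≤ (d-1) * (d-1) := by
          calc ∑ u ∈ C.erase v, (G.neighborFinset u ∩ C).card
              ≤ ∑ _u ∈ C.erase v, (d - 1) := by
                refine Finset.sum_le_sum (fun u hu => ?_)
                have := hupp u (Finset.mem_of_mem_erase hu)
                omega
            _ = (d-1) * (d-1) := by
                rw [Finset.sum_const, smul_eq_mul, Finset.card_erase_of_mem hv, hsd']
        have hsplit : (∑ u ∈ C, (G.neighborFinset u ∩ C).card) =
            (G.neighborFinset v ∩ C).card + ∑ u ∈ C.erase v, (G.neighborFinset u ∩ C).card :=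
          (Finset.add_sum_erase C _ hv).symm
        have hvdeg : d - 1 ≤ (G.neighborFinset v ∩ C).card := by
          refine stmt6_arith2 d _ _ T.card hd hlam ?_ hrest
          omega
        have heq : G.neighborFinset v ∩ C = C.erase v := by
          apply Finset.eq_of_subset_of_card_le
          · intro u hu
            rw [Finset.mem_inter, SimpleGraph.mem_neighborFinset] at hu
            exact Finset.mem_erase.2 ⟨hu.1.ne', hu.2⟩
          · rw [Finset.card_erase_of_mem hv]
            omega
        have : w ∈ G.neighborFinset v ∩ C := heq ▸ Finset.mem_erase.2 ⟨hvw.symm, hw⟩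
        exact (SimpleGraph.mem_neighborFinset _ _ _).1 (Finset.mem_inter.1 this).1
      -- pick four distinct vertices
      obtain ⟨x1, hx1⟩ := hCne
      have h2' : (C.erase x1).Nonempty := by
        rw [← Finset.card_pos, Finset.card_erase_of_mem hx1]; omega
      obtain ⟨x2, hx2⟩ := h2'
      have h3' : ((C.erase x1).erase x2).Nonempty := by
        rw [← Finset.card_pos, Finset.card_erase_of_mem hx2, Finset.card_erase_of_mem hx1]; omega
      obtain ⟨x3, hx3⟩ := h3'
      have h4' : (((C.erase x1).erase x2).erase x3).Nonempty := by
        rw [← Finset.card_pos, Finset.card_erase_of_mem hx3, Finset.card_erase_of_mem hx2,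
          Finset.card_erase_of_mem hx1]; omega
      obtain ⟨x4, hx4⟩ := h4'
      -- unpack memberships
      have e43 : x4 ≠ x3 := (Finset.mem_erase.1 hx4).1
      have hx4a := (Finset.mem_erase.1 hx4).2
      have e42 : x4 ≠ x2 := (Finset.mem_erase.1 hx4a).1
      have hx4b := (Finset.mem_erase.1 hx4a).2
      have e41 : x4 ≠ x1 := (Finset.mem_erase.1 hx4b).1
      have m4 : x4 ∈ C := (Finset.mem_erase.1 hx4b).2
      have e32 : x3 ≠ x2 := (Finset.mem_erase.1 hx3).1
      have hx3a := (Finset.mem_erase.1 hx3).2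
      have e31 : x3 ≠ x1 := (Finset.mem_erase.1 hx3a).1
      have m3 : x3 ∈ C := (Finset.mem_erase.1 hx3a).2
      have e21 : x2 ≠ x1 := (Finset.mem_erase.1 hx2).1
      have m2 : x2 ∈ C := (Finset.mem_erase.1 hx2).2
      exact hnoc4 x1 x2 x3 x4 e31.symm e42.symm
        (hcomplete x1 hx1 x2 m2 e21.symm)
        (hcomplete x2 m2 x3 m3 e32.symm)
        (hcomplete x3 m3 x4 m4 e43.symm)
        (hcomplete x4 m4 x1 hx1 e41)
  -- main argument
  by_contra hcon
  push_neg at hcon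
  -- every b in B has ≥ 3 neighbors in A
  have h3nb : ∀ b ∈ B, 3 ≤ (G.neighborFinset b ∩ A).card := by
    intro b hb
    obtain ⟨hbC, hbnot⟩ := (hmemB b).1 hb
    have hset : G.neighborSet b ∩ (c.supp ∩ {x | ∃ e ∈ T, x ∈ e}) =
        ↑(G.neighborFinset b ∩ A) := by
      ext x
      simp only [Set.mem_inter_iff, SimpleGraph.mem_neighborSet, Set.mem_setOf_eq,
        Finset.coe_inter, Finset.mem_coe, SimpleGraph.mem_neighborFinset]
      constructor
      · rintro ⟨h1, h2, h3⟩
        exact ⟨h1, (hmemA x).2 ⟨(hmemC x).2 h2, h3⟩⟩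
      · rintro ⟨h1, h2⟩
        obtain ⟨hxC, hxe⟩ := (hmemA x).1 h2
        exact ⟨h1, (hmemC x).1 hxC, hxe⟩
    have hc2 := hcon b ((hmemC b).1 hbC) (fun e he hbe => hbnot ⟨e, he, hbe⟩)
    rw [hset, Set.ncard_coe_finset] at hc2
    omega
  obtain ⟨b, hbB⟩ := hBne
  obtain ⟨hbC, hbnot⟩ := (hmemB b).1 hbB
  have hbsupp : b ∈ c.supp := (hmemC b).1 hbC
  -- neighbors of b are in C
  set Nb : Finset V := G.neighborFinset b with hNb
  have hNbC : Nb ⊆ C := by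
    intro w hw
    rw [hNb, SimpleGraph.mem_neighborFinset] at hw
    refine (hmemC w).2 (hstay b hbsupp w hw ?_)
    intro hmem
    exact hbnot ⟨s(b, w), hmem, Sym2.mem_mk_left b w⟩
  have hNbcard : Nb.card = d := hreg b
  -- second neighborhoods
  set S : V → Finset V := fun v => (G.neighborFinset v ∩ C) \ insert b Nb with hS
  have hScard : ∀ v ∈ Nb, d ≤ (S v).card + t v + 2 := by
    intro v hv
    have hvadj : G.Adj b v := (SimpleGraph.mem_neighborFinset _ _ _).1 hv
    have hvC : v ∈ C := hNbC hv
    have hsplit : (S v).card + ((G.neighborFinset v ∩ C) ∩ insert b Nb).card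
        = (G.neighborFinset v ∩ C).card := Finset.card_sdiff_add_card_inter _ _
    have hint : ((G.neighborFinset v ∩ C) ∩ insert b Nb).card ≤ 2 := by
      have hsub : (G.neighborFinset v ∩ C) ∩ insert b Nb ⊆
          insert b (G.neighborFinset v ∩ Nb) := by
        intro x hx
        rw [Finset.mem_inter, Finset.mem_inter, Finset.mem_insert] at hx
        rcases hx.2 with rfl | hxNb
        · exact Finset.mem_insert_self _ _
        · exact Finset.mem_insert_of_mem (Finset.mem_inter.2 ⟨hx.1.1, hxNb⟩)
      have hcomm : (G.neighborFinset v ∩ Nb).card ≤ 1 := by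
        rw [Finset.card_le_one]
        intro x hx y hy
        rw [Finset.mem_inter, SimpleGraph.mem_neighborFinset, hNb,
          SimpleGraph.mem_neighborFinset] at hx hy
        by_contra hxy
        -- C4 : v x b y
        exact hnoc4 v x b y hvadj.ne' hxy hx.1 hx.2.symm hy.2 hy.1.symm
      calc ((G.neighborFinset v ∩ C) ∩ insert b Nb).card
          ≤ (insert b (G.neighborFinset v ∩ Nb)).card := Finset.card_le_card hsub
        _ ≤ (G.neighborFinset v ∩ Nb).card + 1 := Finset.card_insert_le _ _
        _ ≤ 2 := by omega
    have := hdegC v hvC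
    omega
  have hSdisj : ∀ v ∈ Nb, ∀ w ∈ Nb, v ≠ w → Disjoint (S v) (S w) := by
    intro v hv w hw hvw
    rw [Finset.disjoint_left]
    intro x hxv hxw
    rw [hS] at hxv hxw
    simp only [Finset.mem_sdiff, Finset.mem_inter, SimpleGraph.mem_neighborFinset] at hxv hxw
    have hbx : b ≠ x := by
      intro h; exact hxv.2 (h ▸ Finset.mem_insert_self b Nb)
    -- C4 : b v x w
    exact hnoc4 b v x w hbx hvw
      ((SimpleGraph.mem_neighborFinset _ _ _).1 hv) hxv.1.1 hxw.1.1.symm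
      ((SimpleGraph.mem_neighborFinset _ _ _).1 hw).symm
  -- the union bound
  have hunion : 1 + d + (∑ v ∈ Nb, (S v).card) ≤ C.card := by
    have hU : (Nb.biUnion S).card = ∑ v ∈ Nb, (S v).card := Finset.card_biUnion hSdisj
    have hdisj : Disjoint (insert b Nb) (Nb.biUnion S) := by
      rw [Finset.disjoint_right]
      intro x hx hx'
      obtain ⟨v, hv, hxv⟩ := Finset.mem_biUnion.1 hx
      exact (Finset.mem_sdiff.1 hxv).2 hx'
    have hsub : insert b Nb ∪ Nb.biUnion S ⊆ C := by
      apply Finset.union_subset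
      · exact Finset.insert_subset hbC hNbC
      · intro x hx
        obtain ⟨v, hv, hxv⟩ := Finset.mem_biUnion.1 hx
        exact (Finset.mem_inter.1 (Finset.mem_sdiff.1 hxv).1).2
    have hinsert : (insert b Nb).card = 1 + d := by
      have hbnb : b ∉ Nb := by
        rw [hNb, SimpleGraph.mem_neighborFinset]
        exact fun h => (G.irrefl h)
      rw [Finset.card_insert_of_notMem hbnb, hNbcard]
      omega
    calc 1 + d + (∑ v ∈ Nb, (S v).card) = (insert b Nb ∪ Nb.biUnion S).card := by
          rw [Finset.card_union_of_disjoint hdisj, hinsert, hU]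
      _ ≤ C.card := Finset.card_le_card hsub
  -- sum the degree bounds
  have hsumS : d * d ≤ (∑ v ∈ Nb, (S v).card) + T.card + 2 * d := by
    have h1 : d * d ≤ ∑ v ∈ Nb, ((S v).card + t v + 2) := by
      calc d * d = ∑ _v ∈ Nb, d := by rw [Finset.sum_const, smul_eq_mul, hNbcard, mul_comm]
        _ ≤ _ := Finset.sum_le_sum hScard
    rw [Finset.sum_add_distrib, Finset.sum_add_distrib, Finset.sum_const, smul_eq_mul,
      hNbcard] at h1
    have h2 := hsum_t Nb hNbC
    omega
  -- double counting edges between B and A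
  have hBA : 3 * B.card ≤ (d - 1) * A.card := by
    have hcount : (∑ x ∈ B, (G.neighborFinset x ∩ A).card)
        = ∑ a ∈ A, (G.neighborFinset a ∩ B).card := by
      have e1 : ∀ x : V, ∀ D : Finset V,
          G.neighborFinset x ∩ D = D.filter (fun y => G.Adj x y) := by
        intro x D
        ext y
        simp only [Finset.mem_inter, SimpleGraph.mem_neighborFinset, Finset.mem_filter]
        tauto
      simp only [e1, Finset.card_filter]
      rw [Finset.sum_comm]
      apply Finset.sum_congr rfl
      intro a _
      apply Finset.sum_congr rfl
      intro x _
      by_cases h : G.Adj x a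
      · rw [if_pos h, if_pos h.symm]
      · rw [if_neg h, if_neg (fun h' => h h'.symm)]
    have hleft : 3 * B.card ≤ ∑ x ∈ B, (G.neighborFinset x ∩ A).card := by
      calc 3 * B.card = ∑ _x ∈ B, 3 := by rw [Finset.sum_const, smul_eq_mul, mul_comm]
        _ ≤ _ := Finset.sum_le_sum h3nb
    have hright : ∀ a ∈ A, (G.neighborFinset a ∩ B).card ≤ d - 1 := by
      intro a ha
      obtain ⟨haC, he⟩ := (hmemA a).1 ha
      obtain ⟨e, heT, hae⟩ := he
      obtain ⟨y, rfl⟩ := Sym2.mem_iff_exists.1 hae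
      have hay : G.Adj a y := (SimpleGraph.mem_edgeSet G).1 (hTsub heT)
      have hyN : y ∈ G.neighborFinset a := (SimpleGraph.mem_neighborFinset _ _ _).2 hay
      have hyB : y ∉ B := by
        intro hyB
        have hyC : y ∈ C := ((hmemB y).1 hyB).1
        have := hone _ heT a ((hmemC a).1 haC) y ((hmemC y).1 hyC)
          (Sym2.mem_mk_left a y) (Sym2.mem_mk_right a y)
        exact hay.ne this
      have hsub : G.neighborFinset a ∩ B ⊆ (G.neighborFinset a).erase y := by
        intro x hx
        rw [Finset.mem_inter] at hx
        refine Finset.mem_erase.2 ⟨?_, hx.1⟩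
        intro h; exact hyB (h ▸ hx.2)
      calc (G.neighborFinset a ∩ B).card ≤ ((G.neighborFinset a).erase y).card :=
            Finset.card_le_card hsub
        _ = d - 1 := by
              have hca : (G.neighborFinset a).card = d := hreg a
              rw [Finset.card_erase_of_mem hyN, hca]
    calc 3 * B.card ≤ ∑ x ∈ B, (G.neighborFinset x ∩ A).card := hleft
      _ = ∑ a ∈ A, (G.neighborFinset a ∩ B).card := hcount
      _ ≤ ∑ _a ∈ A, (d - 1) := Finset.sum_le_sum hright
      _ = (d - 1) * A.card := by rw [Finset.sum_const, smul_eq_mul, mul_comm]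
  -- final arithmetic contradiction
  have hCsplit : C.card = A.card + B.card := by
    rw [hA, hB]
    exact (Finset.card_filter_add_card_filter_not _).symm
  exact stmt6_arith3 d T.card A.card B.card (∑ v ∈ Nb, (S v).card) C.card
    hd hlam hAcard hCsplit hunion hsumS hBA
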